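/- Let K ≥ N ≥ 1 be natural numbers and let X be a nonzero antisymmetric N-th order tensor of dimension K over ℂ. Then rank_cp(X) ≥ rank_cp(E), where E is the determinant tensor of order N and dimension N. -/
import Mathlib


open scoped BigOperators

/-- The CP (canonical polyadic) rank of an `N`-th order tensor of dimension `K` over `ℂ`:
the least `p` such that the tensor is a sum of `p` elementary tensor products. -/
noncomputable def cpRank {N K : ℕ} (X : (Fin N → Fin K) → ℂ) : ℕ :=
  sInf {p : ℕ | ∃ x : Fin p → Fin N → Fin K → ℂ,
    ∀ k : Fin N → Fin K, X k = ∑ i, ∏ j, x i j (k j)}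

/-- An `N`-th order tensor is antisymmetric if it changes sign under any permutation
of its indices according to the sign of the permutation. -/
def IsAntisymTensor {N K : ℕ} (X : (Fin N → Fin K) → ℂ) : Prop :=
  ∀ (π : Equiv.Perm (Fin N)) (k : Fin N → Fin K),
    X (k ∘ π) = ((Equiv.Perm.sign π : ℤ) : ℂ) * X k

/-- The determinant tensor: `E ℓ = sgn ℓ` if `ℓ` is a permutation of `Fin N`, `0` otherwise. -/
noncomputable def detTensor (N : ℕ) : (Fin N → Fin N) → ℂ :=
  fun ℓ => ∑ π : Equiv.Perm (Fin N),
    if ℓ = ⇑π then ((Equiv.Perm.sign π : ℤ) : ℂ) else 0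

/-- The basis antisymmetric tensor associated with `u : Fin N → Fin K`:
`E_u ℓ = sgn π` if `ℓ = u ∘ π` for a (necessarily unique, when `u` is injective)
permutation `π` of `Fin N`, and `0` otherwise. -/
noncomputable def basisTensor {N K : ℕ} (u : Fin N → Fin K) : (Fin N → Fin K) → ℂ :=
  fun ℓ => ∑ π : Equiv.Perm (Fin N),
    if ℓ = u ∘ ⇑π then ((Equiv.Perm.sign π : ℤ) : ℂ) else 0

/-- A function on `N`-tuples is antisymmetric if it changes sign under any permutation
of its arguments according to the sign of the permutation. -/
def IsAntisymFun {N : ℕ} {Ω : Type*} (f : (Fin N → Ω) → ℂ) : Prop :=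
  ∀ (π : Equiv.Perm (Fin N)) (r : Fin N → Ω),
    f (r ∘ π) = ((Equiv.Perm.sign π : ℤ) : ℂ) * f r

theorem cpRank_antisym_ge_cpRank_detTensor {N K : ℕ} (hN : 1 ≤ N) (hKN : N ≤ K)
    (X : (Fin N → Fin K) → ℂ) (hX : IsAntisymTensor X) (hX0 : X ≠ 0) :
    cpRank (detTensor N) ≤ cpRank X := by
  classical
  set i0 : Fin N := ⟨0, hN⟩ with hi0
  -- X vanishes on non-injective index tuples
  have hvanish : ∀ k : Fin N → Fin K, ¬ Function.Injective k → X k = 0 := by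
    intro k hk
    obtain ⟨a, b, hab, hne⟩ := Function.not_injective_iff.mp hk
    have hswap : k ∘ (Equiv.swap a b) = k := by
      funext m
      by_cases hma : m = a
      · subst hma; simp [Equiv.swap_apply_left, hab.symm]
      · by_cases hmb : m = b
        · subst hmb; simp [Equiv.swap_apply_right, hab]
        · simp [Function.comp, Equiv.swap_apply_of_ne_of_ne hma hmb]
    have h := hX (Equiv.swap a b) k
    rw [hswap, Equiv.Perm.sign_swap hne] at h
    have h' : X k = - X k := by
      simpa using h
    have h2 : (2 : ℂ) * X k = 0 := by linear_combination h'
    simpa using h2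
  obtain ⟨u, hu⟩ : ∃ u, X u ≠ 0 := Function.ne_iff.mp hX0
  have huinj : Function.Injective u := by
    by_contra h
    exact hu (hvanish u h)
  -- the key identity
  have key : ∀ ℓ : Fin N → Fin N, X (u ∘ ℓ) = X u * detTensor N ℓ := by
    intro ℓ
    by_cases hℓ : Function.Injective ℓ
    · have hbij : Function.Bijective ℓ := Finite.injective_iff_bijective.mp hℓ
      set π : Equiv.Perm (Fin N) := Equiv.ofBijective ℓ hbij with hπ
      have hℓπ : ℓ = ⇑π := rfl
      have hdet : detTensor N ℓ = ((Equiv.Perm.sign π : ℤ) : ℂ) := by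
        rw [hℓπ]
        simp only [detTensor, Equiv.coe_fn_injective.eq_iff]
        simp
      rw [hdet, hℓπ, hX π u]
      ring
    · have h1 : X (u ∘ ℓ) = 0 := by
        apply hvanish
        intro h
        exact hℓ (Function.Injective.of_comp h)
      have h2 : detTensor N ℓ = 0 := by
        apply Finset.sum_eq_zero
        intro σ _
        apply if_neg
        intro h
        apply hℓ
        rw [h]
        exact σ.injective
      rw [h1, h2, mul_zero]
  -- nonemptiness of the decomposition set for X
  have hne : {p : ℕ | ∃ x : Fin p → Fin N → Fin K → ℂ,
      ∀ k : Fin N → Fin K, X k = ∑ i, ∏ j, x i j (k j)}.Nonempty := by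
    refine ⟨Fintype.card (Fin N → Fin K), ?_⟩
    set e := (Fintype.equivFin (Fin N → Fin K)).symm with he
    refine ⟨fun i j m => if m = e i j then (if j = i0 then X (e i) else 1) else 0, ?_⟩
    intro k
    have hprod : ∀ i, (∏ j, if k j = e i j then (if j = i0 then X (e i) else 1) else 0)
        = if k = e i then X (e i) else 0 := by
      intro i
      by_cases h : k = e i
      · rw [if_pos h]
        have hj : ∀ j, k j = e i j := fun j => congrFun h j
        simp [hj]
      · rw [if_neg h]
        obtain ⟨j, hj⟩ := Function.ne_iff.mp h
        exact Finset.prod_eq_zero (Finset.mem_univ j) (if_neg hj)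
    calc X k = ∑ k' : Fin N → Fin K, if k = k' then X k' else 0 := by simp
      _ = ∑ i, if k = e i then X (e i) else 0 :=
          (Equiv.sum_comp e (fun k' => if k = k' then X k' else 0)).symm
      _ = ∑ i, ∏ j, if k j = e i j then (if j = i0 then X (e i) else 1) else 0 := by
          simp only [hprod]
  -- main argument
  obtain ⟨x, hx⟩ : ∃ x : Fin (cpRank X) → Fin N → Fin K → ℂ,
      ∀ k : Fin N → Fin K, X k = ∑ i, ∏ j, x i j (k j) := Nat.sInf_mem hne
  apply Nat.sInf_le
  refine ⟨fun i j m => (if j = i0 then (X u)⁻¹ else 1) * x i j (u m), ?_⟩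
  intro ℓ
  have : ∀ i, (∏ j, (if j = i0 then (X u)⁻¹ else 1) * x i j (u (ℓ j)))
      = (X u)⁻¹ * ∏ j, x i j (u (ℓ j)) := by
    intro i
    rw [Finset.prod_mul_distrib]
    congr 1
    simp
  simp only [this, ← Finset.mul_sum]
  have hXul : X (u ∘ ℓ) = ∑ i, ∏ j, x i j (u (ℓ j)) := hx (u ∘ ℓ)
  rw [← hXul, key ℓ, inv_mul_cancel_left₀ hu]
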